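/- With γ₀ and δ₀ as in the construction (γ₀ the 1-periodic piecewise-linear function equal to -4x+1 on [0,1/2) and 4x-3 on [1/2,1); δ₀² the piecewise-linear homeomorphism commuting with x ↦ x+1 given by δ₀²(x) = x/4 on [0,4/12), x - 1/4 on [4/12,5/12), 4x - 3/2 on [5/12,1/2), and δ₀²(x+1/2) = δ₀⁻²(x)+1/2), the function φ(x) = Σ_{k=0}^{11} γ₀(δ₀²(x - k/12)) is constant equal to 7 on ℝ. -/

import Mathlib

open Set Finset in
/-- With `γ₀` the 1-periodic piecewise-linear function and `δ₂ = δ₀²` the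
piecewise-linear homeomorphism of the construction, the function
`φ(x) = ∑_{k=0}^{11} γ₀ (δ₀² (x - k/12))` is constant equal to `7`. -/
theorem stmt_7 (γ₀ : ℝ → ℝ)
    (hγper : ∀ x : ℝ, γ₀ (x + 1) = γ₀ x)
    (hγ1 : ∀ x ∈ Ico (0 : ℝ) (1/2), γ₀ x = -4 * x + 1)
    (hγ2 : ∀ x ∈ Ico (1/2 : ℝ) 1, γ₀ x = 4 * x - 3)
    (δ₂ : ℝ ≃o ℝ)
    (hd1 : ∀ x ∈ Ico (0 : ℝ) (4/12), δ₂ x = x / 4)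
    (hd2 : ∀ x ∈ Ico (4/12 : ℝ) (5/12), δ₂ x = x - 1/4)
    (hd3 : ∀ x ∈ Ico (5/12 : ℝ) (1/2), δ₂ x = 4 * x - 3/2)
    (hdhalf : ∀ x : ℝ, δ₂ (x + 1/2) = δ₂.symm x + 1/2)
    (hdper : ∀ x : ℝ, δ₂ (x + 1) = δ₂ x + 1) :
    ∀ x : ℝ, ∑ k ∈ Finset.range 12, γ₀ (δ₂ (x - k / 12)) = 7 := by
  -- shifting the argument by 1 does not change a summand
  have shift : ∀ u : ℝ, γ₀ (δ₂ (u - 1)) = γ₀ (δ₂ u) := by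
    intro u
    have h := hdper (u - 1)
    rw [show u - 1 + 1 = u from by ring] at h
    have h2 : δ₂ (u - 1) = δ₂ u - 1 := by linarith
    rw [h2, ← hγper (δ₂ u - 1), show δ₂ u - 1 + 1 = δ₂ u from by ring]
  -- values of δ₂.symm
  have S1 : ∀ v ∈ Ico (0:ℝ) (1/12), δ₂.symm v = 4 * v := by
    intro v ⟨h1, h2⟩
    rw [OrderIso.symm_apply_eq, hd1 (4*v) ⟨by linarith, by linarith⟩]; ring
  have S2 : ∀ v ∈ Ico (1/12:ℝ) (1/6), δ₂.symm v = v + 1/4 := by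
    intro v ⟨h1, h2⟩
    rw [OrderIso.symm_apply_eq, hd2 (v + 1/4) ⟨by linarith, by linarith⟩]; ring
  have S3 : ∀ v ∈ Ico (1/6:ℝ) (1/2), δ₂.symm v = v/4 + 3/8 := by
    intro v ⟨h1, h2⟩
    rw [OrderIso.symm_apply_eq, hd3 (v/4 + 3/8) ⟨by linarith, by linarith⟩]; ring
  have D : ∀ u ∈ Ico (1/2:ℝ) 1, δ₂ u = δ₂.symm (u - 1/2) + 1/2 := by
    intro u _
    have := hdhalf (u - 1/2)
    rwa [show u - 1/2 + 1/2 = u from by ring] at this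
  -- values of γ₀ ∘ δ₂ on [0,1)
  have A : ∀ u ∈ Ico (0:ℝ) (4/12), γ₀ (δ₂ u) = -u + 1 := by
    intro u ⟨h1, h2⟩
    rw [hd1 u ⟨h1, h2⟩, hγ1 (u/4) ⟨by linarith, by linarith⟩]; ring
  have B : ∀ u ∈ Ico (4/12:ℝ) (5/12), γ₀ (δ₂ u) = -4*u + 2 := by
    intro u ⟨h1, h2⟩
    rw [hd2 u ⟨h1, h2⟩, hγ1 (u - 1/4) ⟨by linarith, by linarith⟩]; ring
  have C : ∀ u ∈ Ico (5/12:ℝ) (1/2), γ₀ (δ₂ u) = -16*u + 7 := by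
    intro u ⟨h1, h2⟩
    rw [hd3 u ⟨h1, h2⟩, hγ1 (4*u - 3/2) ⟨by linarith, by linarith⟩]; ring
  have E1 : ∀ u ∈ Ico (1/2:ℝ) (7/12), γ₀ (δ₂ u) = 16*u - 9 := by
    intro u ⟨h1, h2⟩
    rw [D u ⟨h1, by linarith⟩, S1 (u - 1/2) ⟨by linarith, by linarith⟩,
      hγ2 (4*(u - 1/2) + 1/2) ⟨by linarith, by linarith⟩]; ring
  have E2 : ∀ u ∈ Ico (7/12:ℝ) (8/12), γ₀ (δ₂ u) = 4*u - 2 := by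
    intro u ⟨h1, h2⟩
    rw [D u ⟨by linarith, by linarith⟩, S2 (u - 1/2) ⟨by linarith, by linarith⟩,
      hγ2 ((u - 1/2) + 1/4 + 1/2) ⟨by linarith, by linarith⟩]; ring
  have E3 : ∀ u ∈ Ico (8/12:ℝ) 1, γ₀ (δ₂ u) = u := by
    intro u ⟨h1, h2⟩
    rw [D u ⟨by linarith, h2⟩, S3 (u - 1/2) ⟨by linarith, by linarith⟩,
      hγ2 ((u - 1/2)/4 + 3/8 + 1/2) ⟨by linarith, by linarith⟩]; ring
  -- the value on the fundamental domain [0, 1/12)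
  have step : ∀ y : ℝ, 0 ≤ y → y < 1/12 →
      ∑ k ∈ Finset.range 12, γ₀ (δ₂ (y - k / 12)) = 7 := by
    intro y h1 h2
    simp only [Finset.sum_range_succ, Finset.sum_range_zero]
    norm_num
    have t0 : γ₀ (δ₂ y) = -y + 1 := A y ⟨h1, by linarith⟩
    have t1 : γ₀ (δ₂ (y - 1/12)) = y + 11/12 := by
      rw [show y - 1/12 = (y + 11/12) - 1 from by ring, shift,
        E3 (y + 11/12) ⟨by linarith, by linarith⟩]
    have t2 : γ₀ (δ₂ (y - 1/6)) = y + 10/12 := by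
      rw [show y - 1/6 = (y + 10/12) - 1 from by ring, shift,
        E3 (y + 10/12) ⟨by linarith, by linarith⟩]
    have t3 : γ₀ (δ₂ (y - 1/4)) = y + 9/12 := by
      rw [show y - 1/4 = (y + 9/12) - 1 from by ring, shift,
        E3 (y + 9/12) ⟨by linarith, by linarith⟩]
    have t4 : γ₀ (δ₂ (y - 1/3)) = y + 8/12 := by
      rw [show y - 1/3 = (y + 8/12) - 1 from by ring, shift,
        E3 (y + 8/12) ⟨by linarith, by linarith⟩]
    have t5 : γ₀ (δ₂ (y - 5/12)) = 4*(y + 7/12) - 2 := by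
      rw [show y - 5/12 = (y + 7/12) - 1 from by ring, shift,
        E2 (y + 7/12) ⟨by linarith, by linarith⟩]
    have t6 : γ₀ (δ₂ (y - 1/2)) = 16*(y + 6/12) - 9 := by
      rw [show y - 1/2 = (y + 6/12) - 1 from by ring, shift,
        E1 (y + 6/12) ⟨by linarith, by linarith⟩]
    have t7 : γ₀ (δ₂ (y - 7/12)) = -16*(y + 5/12) + 7 := by
      rw [show y - 7/12 = (y + 5/12) - 1 from by ring, shift,
        C (y + 5/12) ⟨by linarith, by linarith⟩]
    have t8 : γ₀ (δ₂ (y - 2/3)) = -4*(y + 4/12) + 2 := by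
      rw [show y - 2/3 = (y + 4/12) - 1 from by ring, shift,
        B (y + 4/12) ⟨by linarith, by linarith⟩]
    have t9 : γ₀ (δ₂ (y - 3/4)) = -(y + 3/12) + 1 := by
      rw [show y - 3/4 = (y + 3/12) - 1 from by ring, shift,
        A (y + 3/12) ⟨by linarith, by linarith⟩]
    have t10 : γ₀ (δ₂ (y - 5/6)) = -(y + 2/12) + 1 := by
      rw [show y - 5/6 = (y + 2/12) - 1 from by ring, shift,
        A (y + 2/12) ⟨by linarith, by linarith⟩]
    have t11 : γ₀ (δ₂ (y - 11/12)) = -(y + 1/12) + 1 := by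
      rw [show y - 11/12 = (y + 1/12) - 1 from by ring, shift,
        A (y + 1/12) ⟨by linarith, by linarith⟩]
    rw [t0, t1, t2, t3, t4, t5, t6, t7, t8, t9, t10, t11]; ring
  -- periodicity of the sum with period 1/12
  have per : ∀ x : ℝ, ∑ k ∈ Finset.range 12, γ₀ (δ₂ (x + 1/12 - k / 12)) =
      ∑ k ∈ Finset.range 12, γ₀ (δ₂ (x - k / 12)) := by
    intro x
    have h11 : γ₀ (δ₂ (x - 11/12)) = γ₀ (δ₂ (x + 1/12)) := by
      rw [show x - 11/12 = (x + 1/12) - 1 from by ring, shift]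
    simp only [Finset.sum_range_succ, Finset.sum_range_zero]
    norm_num
    rw [h11]
    ring_nf
  -- extend to all integer multiples of 1/12
  have perZ : ∀ n : ℤ, ∀ x : ℝ, ∑ k ∈ Finset.range 12, γ₀ (δ₂ (x + n/12 - k / 12)) =
      ∑ k ∈ Finset.range 12, γ₀ (δ₂ (x - k / 12)) := by
    intro n
    induction n using Int.induction_on with
    | zero =>
      intro x
      exact Finset.sum_congr rfl fun k _ => congrArg (fun t => γ₀ (δ₂ t)) (by push_cast; ring)
    | succ m ih =>
      intro x
      refine Eq.trans (Finset.sum_congr rfl fun k _ =>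
        congrArg (fun t => γ₀ (δ₂ t)) (?_ : _ = x + (m:ℝ)/12 + 1/12 - (k:ℝ)/12))
        (Eq.trans (per (x + (m:ℝ)/12)) ?_)
      · push_cast; ring
      · refine Eq.trans (Finset.sum_congr rfl fun k _ =>
          congrArg (fun t => γ₀ (δ₂ t)) (by push_cast; ring)) (ih x)
    | pred m ih =>
      intro x
      have ih' : ∀ x' : ℝ, ∑ k ∈ Finset.range 12, γ₀ (δ₂ (x' - (m:ℝ)/12 - k / 12)) =
          ∑ k ∈ Finset.range 12, γ₀ (δ₂ (x' - k / 12)) := by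
        intro x'
        refine Eq.trans (Finset.sum_congr rfl fun k _ =>
          congrArg (fun t => γ₀ (δ₂ t)) (by push_cast; ring)) (ih x')
      refine Eq.trans (Finset.sum_congr rfl fun k _ =>
        congrArg (fun t => γ₀ (δ₂ t)) (?_ : _ = x - 1/12 - (m:ℝ)/12 - (k:ℝ)/12))
        (Eq.trans (ih' (x - 1/12)) (Eq.trans (per (x - 1/12)).symm
          (Finset.sum_congr rfl fun k _ =>
            congrArg (fun t => γ₀ (δ₂ t)) (by push_cast; ring))))
      push_cast; ring
  intro x
  set n : ℤ := ⌊12 * x⌋ with hn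
  have hfl : (n:ℝ) ≤ 12 * x := Int.floor_le _
  have hfu : 12 * x < n + 1 := Int.lt_floor_add_one _
  have := perZ n (x - n/12)
  rw [show x - (n:ℝ)/12 + (n:ℝ)/12 = x from by ring] at this
  rw [this]
  exact step (x - n/12) (by linarith) (by linarith)
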